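/- Let C_k be a cycle of order k, where k is even and k ≥ 4. Then af(C_k^{k/2}) = k(k − 2)/4; moreover for every m ≥ k/2, C_k^m is the complete graph K_k and af(C_k^m) = k(k − 2)/4. -/

import Mathlib

open SimpleGraph

/-- The `m`-th power of a graph `G`: two vertices are adjacent iff their
distance in `G` is at least 1 and at most `m`. -/
def SimpleGraph.power {V : Type*} (G : SimpleGraph V) (m : ℕ) : SimpleGraph V where
  Adj x y := 1 ≤ G.dist x y ∧ G.dist x y ≤ m
  symm := ⟨by intro x y h; rwa [SimpleGraph.dist_comm]⟩
  loopless := ⟨by intro x h; simp [SimpleGraph.dist_self] at h⟩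

/-- A graph has a unique perfect matching. -/
def HasUniquePerfectMatching {V : Type*} (G : SimpleGraph V) : Prop :=
  ∃! M : G.Subgraph, M.IsPerfectMatching

open Classical in
/-- The anti-forcing number of a graph `G`: the smallest cardinality of a set `S`
of edges of `G` such that `G - S` has a unique perfect matching; if no such set
exists, it is defined as the number of edges of `G`. -/
noncomputable def antiForcing {V : Type*} (G : SimpleGraph V) : ℕ :=
  if (∃ S : Set (Sym2 V), S ⊆ G.edgeSet ∧ HasUniquePerfectMatching (G.deleteEdges S))
  then sInf {n : ℕ | ∃ S : Set (Sym2 V), S ⊆ G.edgeSet ∧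
    HasUniquePerfectMatching (G.deleteEdges S) ∧ S.ncard = n}
  else G.edgeSet.ncard

section AntiForcingProof

section Swap
variable {V : Type*} {G : SimpleGraph V} {M : G.Subgraph}

noncomputable def pfun (hM : M.IsPerfectMatching) (v : V) : V :=
  (hM.1 (hM.2 v)).choose

lemma pfun_adj (hM : M.IsPerfectMatching) (v : V) : M.Adj v (pfun hM v) :=
  (hM.1 (hM.2 v)).choose_spec.1

lemma pfun_eq (hM : M.IsPerfectMatching) {v w : V} (h : M.Adj v w) : w = pfun hM v :=
  (hM.1 (hM.2 v)).choose_spec.2 w h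

lemma pfun_pfun (hM : M.IsPerfectMatching) (v : V) : pfun hM (pfun hM v) = v :=
  (pfun_eq hM ((pfun_adj hM v).symm)).symm

lemma pfun_ne (hM : M.IsPerfectMatching) (v : V) : pfun hM v ≠ v :=
  (M.adj_sub (pfun_adj hM v)).ne'

lemma swap_lemma (hU : ∃! N : G.Subgraph, N.IsPerfectMatching) (hM : M.IsPerfectMatching)
    {x y : V} (hxy : G.Adj x y) (hne : y ≠ pfun hM x)
    (h2 : G.Adj (pfun hM x) (pfun hM y)) : False := by
  classical
  set p := pfun hM with hp
  have hxyne : x ≠ y := hxy.ne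
  have hpx : p x ≠ x := pfun_ne hM x
  have hpy : p y ≠ y := pfun_ne hM y
  have hpp : ∀ v, p (p v) = v := fun v => pfun_pfun hM v
  have hxpy : x ≠ p y := by
    intro h
    apply hne
    rw [h]
    exact (hpp y).symm
  have hpxpy : p x ≠ p y := by
    intro h
    have h2 : p (p x) = p (p y) := congrArg p h
    rw [hpp, hpp] at h2
    exact hxyne h2
  set s : Set V := {x, y, p x, p y} with hs
  have hmem : ∀ v, v ∈ s ↔ v = x ∨ v = y ∨ v = p x ∨ v = p y := by
    intro v; simp [hs]
  have hpvs : ∀ v, v ∉ s → p v ∉ s := by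
    intro v hv hpv
    rcases (hmem (p v)).mp hpv with h | h | h | h
    · exact hv <| (hmem v).mpr <| Or.inr <| Or.inr <| Or.inl (by rw [← h]; exact (hpp v).symm)
    · exact hv <| (hmem v).mpr <| Or.inr <| Or.inr <| Or.inr (by rw [← h]; exact (hpp v).symm)
    · exact hv <| (hmem v).mpr <| Or.inl (by have := congrArg p h; rwa [hpp, hpp] at this)
    · exact hv <| (hmem v).mpr <| Or.inr <| Or.inl (by have := congrArg p h; rwa [hpp, hpp] at this)
  set M' : G.Subgraph :=
    { verts := Set.univ
      Adj := fun a b => (M.Adj a b ∧ a ∉ s ∧ b ∉ s) ∨ (a = x ∧ b = y) ∨ (a = y ∧ b = x) ∨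
        (a = p x ∧ b = p y) ∨ (a = p y ∧ b = p x)
      adj_sub := by
        rintro a b (⟨h, _, _⟩ | ⟨rfl, rfl⟩ | ⟨rfl, rfl⟩ | ⟨rfl, rfl⟩ | ⟨rfl, rfl⟩)
        · exact M.adj_sub h
        · exact hxy
        · exact hxy.symm
        · exact h2
        · exact h2.symm
      edge_vert := fun _ => trivial
      symm := by
        constructor
        rintro a b (⟨h, h1, h2⟩ | ⟨rfl, rfl⟩ | ⟨rfl, rfl⟩ | ⟨rfl, rfl⟩ | ⟨rfl, rfl⟩)
        · exact Or.inl ⟨h.symm, h2, h1⟩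
        · exact Or.inr (Or.inr (Or.inl ⟨rfl, rfl⟩))
        · exact Or.inr (Or.inl ⟨rfl, rfl⟩)
        · exact Or.inr (Or.inr (Or.inr (Or.inr ⟨rfl, rfl⟩)))
        · exact Or.inr (Or.inr (Or.inr (Or.inl ⟨rfl, rfl⟩))) } with hM'def
  have hxs : x ∈ s := (hmem x).mpr (Or.inl rfl)
  have hys : y ∈ s := (hmem y).mpr (Or.inr (Or.inl rfl))
  have hpxs : p x ∈ s := (hmem _).mpr (Or.inr (Or.inr (Or.inl rfl)))
  have hpys : p y ∈ s := (hmem _).mpr (Or.inr (Or.inr (Or.inr rfl)))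
  have key : ∀ a b : V, a ∈ s → b ∈ s → (M'.Adj a b ↔
      ((a = x ∧ b = y) ∨ (a = y ∧ b = x) ∨ (a = p x ∧ b = p y) ∨ (a = p y ∧ b = p x))) := by
    intro a b ha hb
    constructor
    · rintro (⟨h, h1, _⟩ | h) 
      · exact absurd ha h1
      · exact h
    · intro h; exact Or.inr h
  have hM' : M'.IsPerfectMatching := by
    constructor
    · intro v _
      by_cases hv : v ∈ s
      · rcases (hmem v).mp hv with rfl | rfl | rfl | rfl
        · refine ⟨y, Or.inr (Or.inl ⟨rfl, rfl⟩), ?_⟩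
          rintro w (⟨_, h1, _⟩ | ⟨_, rfl⟩ | ⟨h1, rfl⟩ | ⟨h1, rfl⟩ | ⟨h1, rfl⟩)
          · exact absurd hxs h1
          · rfl
          · exact absurd h1 hxyne
          · exact absurd h1.symm hpx
          · exact absurd h1 hxpy
        · refine ⟨x, Or.inr (Or.inr (Or.inl ⟨rfl, rfl⟩)), ?_⟩
          rintro w (⟨_, h1, _⟩ | ⟨h1, rfl⟩ | ⟨_, rfl⟩ | ⟨h1, rfl⟩ | ⟨h1, rfl⟩)
          · exact absurd hys h1
          · exact absurd h1.symm hxyne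
          · rfl
          · exact absurd h1 hne
          · exact absurd h1.symm hpy
        · refine ⟨p y, Or.inr (Or.inr (Or.inr (Or.inl ⟨rfl, rfl⟩))), ?_⟩
          rintro w (⟨_, h1, _⟩ | ⟨h1, rfl⟩ | ⟨h1, rfl⟩ | ⟨_, rfl⟩ | ⟨h1, rfl⟩)
          · exact absurd hpxs h1
          · exact absurd h1 hpx
          · exact absurd h1.symm hne
          · rfl
          · exact absurd h1 hpxpy
        · refine ⟨p x, Or.inr (Or.inr (Or.inr (Or.inr ⟨rfl, rfl⟩))), ?_⟩
          rintro w (⟨_, h1, _⟩ | ⟨h1, rfl⟩ | ⟨h1, rfl⟩ | ⟨h1, rfl⟩ | ⟨_, rfl⟩)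
          · exact absurd hpys h1
          · exact absurd h1.symm hxpy
          · exact absurd h1 hpy
          · exact absurd h1.symm hpxpy
          · rfl
      · refine ⟨p v, Or.inl ⟨pfun_adj hM v, hv, hpvs v hv⟩, ?_⟩
        rintro w (⟨h, _, _⟩ | ⟨h1, rfl⟩ | ⟨h1, rfl⟩ | ⟨h1, rfl⟩ | ⟨h1, rfl⟩)
        · exact pfun_eq hM h
        · exact absurd ((hmem v).mpr (Or.inl h1)) hv
        · exact absurd ((hmem v).mpr (Or.inr (Or.inl h1))) hv
        · exact absurd ((hmem v).mpr (Or.inr (Or.inr (Or.inl h1)))) hv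
        · exact absurd ((hmem v).mpr (Or.inr (Or.inr (Or.inr h1)))) hv
    · intro v; exact trivial
  obtain ⟨N, hN, huniq⟩ := hU
  have hMM' : M' = M := (huniq M' hM').trans (huniq M hM).symm
  have : M.Adj x y := by
    rw [← hMM']
    exact Or.inr (Or.inl ⟨rfl, rfl⟩)
  exact hne (pfun_eq hM this)

end Swap



lemma hetyei_bound {k n : ℕ} (hk : k = 2 * n) (G : SimpleGraph (Fin k))
    (hU : ∃! N : G.Subgraph, N.IsPerfectMatching) : G.edgeSet.ncard ≤ n * n := by
  classical
  obtain ⟨M, hM, -⟩ := id hU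
  set p := pfun hM with hpdef
  have hpp : ∀ v, p (p v) = v := pfun_pfun hM
  have hpne : ∀ v, p v ≠ v := pfun_ne hM
  set R : Finset (Fin k) := Finset.univ.filter (fun v => v < p v) with hRdef
  have hR' : Finset.univ.filter (fun v => ¬ v < p v) =
      Finset.univ.filter (fun v => p v < v) := by
    apply Finset.filter_congr
    intro v _
    simp only [not_lt, eq_iff_iff]
    exact ⟨fun h => lt_of_le_of_ne h (hpne v), le_of_lt⟩
  have hRR' : R.card = (Finset.univ.filter (fun v => p v < v)).card := by
    apply Finset.card_nbij' (i := p) (j := p)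
    · intro a ha
      simp only [hRdef, Finset.mem_coe, Finset.mem_filter, Finset.mem_univ, true_and, hpp] at ha ⊢
      exact ha
    · intro a ha
      simp only [hRdef, Finset.mem_coe, Finset.mem_filter, Finset.mem_univ, true_and, hpp] at ha ⊢
      exact ha
    · intro a _; exact hpp a
    · intro a _; exact hpp a
  have hRcard : R.card = n := by
    have h1 := Finset.card_filter_add_card_filter_not
      (s := (Finset.univ : Finset (Fin k))) (p := fun v => v < p v)
    rw [hR'] at h1
    simp only [Finset.card_univ, Fintype.card_fin] at h1
    rw [← hRdef, ← hRR'] at h1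
    omega
  have hrmem : ∀ v, min v (p v) ∈ R := by
    intro v
    simp only [hRdef, Finset.mem_filter, Finset.mem_univ, true_and]
    rcases le_total v (p v) with h | h
    · rw [min_eq_left h]
      exact lt_of_le_of_ne h (Ne.symm (hpne v))
    · rw [min_eq_right h, hpp]
      exact lt_of_le_of_ne h (hpne v)
  have hfib : ∀ a b : Fin k, min a (p a) = min b (p b) → b = a ∨ b = p a := by
    intro a b h
    rcases le_total a (p a) with h1 | h1 <;> rcases le_total b (p b) with h2 | h2
    · rw [min_eq_left h1, min_eq_left h2] at h; exact Or.inl h.symm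
    · rw [min_eq_left h1, min_eq_right h2] at h
      exact Or.inr (by rw [h]; exact (hpp b).symm)
    · rw [min_eq_right h1, min_eq_left h2] at h; exact Or.inr h.symm
    · rw [min_eq_right h1, min_eq_right h2] at h
      have := congrArg p h
      rw [hpp, hpp] at this
      exact Or.inl this.symm
  have hbit : ∀ v, decide (p v < p (p v)) = !decide (v < p v) := by
    intro v
    rw [hpp]
    by_cases h : v < p v
    · simp [h, asymm h]
    · have h2 : p v < v := lt_of_le_of_ne (not_lt.mp h) (hpne v)
      simp [h, h2]
  set Dm := Finset.univ.filter (fun d : G.Dart => d.snd = p d.fst) with hDm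
  set Dc := Finset.univ.filter (fun d : G.Dart => ¬ d.snd = p d.fst) with hDc
  have hsplit : Dm.card + Dc.card = Fintype.card G.Dart := by
    rw [hDm, hDc, Finset.card_filter_add_card_filter_not, Finset.card_univ]
  have hDmcard : Dm.card ≤ k := by
    have h2 : Dm.card ≤ (Finset.univ : Finset (Fin k)).card := by
      apply Finset.card_le_card_of_injOn (fun d => d.fst)
      · intro d _; exact Finset.mem_univ _
      · intro d hd d' hd' h
        simp only [hDm, Finset.mem_coe, Finset.mem_filter, Finset.mem_univ, true_and] at hd hd'
        apply SimpleGraph.Dart.ext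
        apply Prod.ext h
        rw [hd, hd']
        exact congrArg p h
    simpa using h2
  set T := ((R ×ˢ R).filter (fun ab : Fin k × Fin k => ¬ ab.1 = ab.2)) ×ˢ
    (Finset.univ : Finset Bool) with hT
  have hTcard : T.card = (n * n - n) * 2 := by
    rw [hT, Finset.card_product]
    have h1 := Finset.card_filter_add_card_filter_not
      (s := R ×ˢ R) (p := fun ab : Fin k × Fin k => ab.1 = ab.2)
    have h2 : (R ×ˢ R).filter (fun ab : Fin k × Fin k => ab.1 = ab.2) =
        R.image (fun a => (a, a)) := by
      ext ⟨a, b⟩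
      simp only [Finset.mem_filter, Finset.mem_product, Finset.mem_image, Prod.mk.injEq]
      constructor
      · rintro ⟨⟨ha, _⟩, h⟩; exact ⟨a, ha, rfl, h⟩
      · rintro ⟨c, hc, rfl, rfl⟩; exact ⟨⟨hc, hc⟩, rfl⟩
    have h3 : (R.image (fun a => (a, a))).card = n := by
      rw [Finset.card_image_of_injective _ (fun a b h => (Prod.mk.injEq _ _ _ _).mp h |>.1),
        hRcard]
    rw [h2, h3] at h1
    rw [Finset.card_product, hRcard] at h1
    simp only [Fintype.card_bool, Finset.card_univ]
    omega
  have hDccard : Dc.card ≤ T.card := by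
    apply Finset.card_le_card_of_injOn
      (fun d => ((min d.fst (p d.fst), min d.snd (p d.snd)),
        (decide (d.fst < p d.fst) != decide (d.snd < p d.snd))))
    · intro d hd
      simp only [hDc, Finset.mem_coe, Finset.mem_filter, Finset.mem_univ, true_and] at hd
      simp only [hT, Finset.mem_coe, Finset.mem_product, Finset.mem_filter, Finset.mem_univ, and_true]
      refine ⟨⟨hrmem _, hrmem _⟩, ?_⟩
      intro h
      rcases hfib _ _ h with h2 | h2
      · exact d.fst_ne_snd h2.symm
      · exact hd h2
    · intro d hd d' hd' h
      simp only [hDc, Finset.mem_coe, Finset.mem_filter, Finset.mem_univ, true_and] at hd hd'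
      simp only [Prod.mk.injEq] at h
      obtain ⟨⟨e1, e2⟩, e3⟩ := h
      have hf := hfib _ _ e1
      have hs := hfib _ _ e2
      rcases hf with hf1 | hf1 <;> rcases hs with hs1 | hs1
      · exact SimpleGraph.Dart.ext _ _ (Prod.ext hf1.symm hs1.symm)
      · exfalso
        rw [hf1, hs1, hbit] at e3
        have h1 : ∀ x y : Bool, ¬ ((x != y) = (x != !y)) := by decide
        exact h1 _ _ e3
      · exfalso
        rw [hf1, hs1, hbit] at e3
        have h1 : ∀ x y : Bool, ¬ ((x != y) = ((!x) != y)) := by decide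
        exact h1 _ _ e3
      · have hadj' : G.Adj (p d.fst) (p d.snd) := by
          rw [← hf1, ← hs1]; exact d'.adj
        exact absurd hadj' (fun hadj' => swap_lemma hU hM d.adj hd hadj')
  have hdartcard := SimpleGraph.dart_card_eq_twice_card_edges G
  have hedge : G.edgeSet.ncard = G.edgeFinset.card := by
    rw [SimpleGraph.edgeFinset, Set.ncard_eq_toFinset_card']
  have hnn : n ≤ n * n := by nlinarith
  have h2E : 2 * G.edgeFinset.card ≤ 2 * (n * n) := by
    calc 2 * G.edgeFinset.card = Fintype.card G.Dart := hdartcard.symm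
      _ = Dm.card + Dc.card := hsplit.symm
      _ ≤ k + (n * n - n) * 2 := add_le_add hDmcard (hDccard.trans_eq hTcard)
      _ ≤ 2 * (n * n) := by omega
  omega



/-- The extremal graph with a unique perfect matching on `Fin k`. -/
def Hgraph (k : ℕ) : SimpleGraph (Fin k) where
  Adj x y := x ≠ y ∧ (x.val / 2 = y.val / 2 ∨ (x.val % 2 = 0 ∧ y.val / 2 < x.val / 2) ∨
    (y.val % 2 = 0 ∧ x.val / 2 < y.val / 2))
  symm := by
    constructor
    intro x y ⟨h1, h2⟩
    refine ⟨h1.symm, ?_⟩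
    tauto
  loopless := ⟨by intro x ⟨h1, _⟩; exact h1 rfl⟩

lemma Hgraph_adj {k : ℕ} {x y : Fin k} : (Hgraph k).Adj x y ↔ x ≠ y ∧
    (x.val / 2 = y.val / 2 ∨ (x.val % 2 = 0 ∧ y.val / 2 < x.val / 2) ∨
    (y.val % 2 = 0 ∧ x.val / 2 < y.val / 2)) := Iff.rfl

/-- The standard matching on `Fin k`. -/
def M0 (k : ℕ) : (Hgraph k).Subgraph where
  verts := Set.univ
  Adj x y := x.val / 2 = y.val / 2 ∧ x ≠ y
  adj_sub := by rintro x y ⟨h1, h2⟩; exact ⟨h2, Or.inl h1⟩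
  edge_vert := fun _ => trivial
  symm := ⟨by rintro x y ⟨h1, h2⟩; exact ⟨h1.symm, h2.symm⟩⟩

lemma M0_adj {k : ℕ} {x y : Fin k} : (M0 k).Adj x y ↔ x.val / 2 = y.val / 2 ∧ x ≠ y := Iff.rfl

lemma M0_isPerfectMatching {k n : ℕ} (hk : k = 2 * n) : (M0 k).IsPerfectMatching := by
  constructor
  · rintro v -
    have hvlt := v.isLt
    have hwlt : (if v.val % 2 = 0 then v.val + 1 else v.val - 1) < k := by
      split_ifs <;> omega
    refine ⟨⟨_, hwlt⟩, ⟨?_, ?_⟩, ?_⟩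
    · show v.val / 2 = (if v.val % 2 = 0 then v.val + 1 else v.val - 1) / 2
      split_ifs <;> omega
    · apply Fin.ne_of_val_ne
      show v.val ≠ (if v.val % 2 = 0 then v.val + 1 else v.val - 1)
      split_ifs <;> omega
    · rintro w ⟨h1, h2⟩
      have hw := w.isLt
      have h2v : v.val ≠ w.val := Fin.val_ne_of_ne h2
      apply Fin.ext
      show w.val = (if v.val % 2 = 0 then v.val + 1 else v.val - 1)
      split_ifs <;> omega
  · intro v; exact trivial

lemma M0_unique {k n : ℕ} (hk : k = 2 * n) (N : (Hgraph k).Subgraph)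
    (hN : N.IsPerfectMatching) : N = M0 k := by
  have key : ∀ d : ℕ, ∀ v w : Fin k, v.val % 2 = 1 → k ≤ v.val + 1 + 2 * d →
      N.Adj v w → w.val / 2 = v.val / 2 := by
    intro d
    induction d using Nat.strong_induction_on with
    | _ d ih =>
      intro v w hodd hbound hadj
      obtain ⟨hne, hcase⟩ := N.adj_sub hadj
      have hvlt := v.isLt
      have hwlt := w.isLt
      rcases hcase with h | h | h
      · exact h.symm
      · omega
      · exfalso
        have hwlt1 : w.val + 1 < k := by omega
        set w' : Fin k := ⟨w.val + 1, hwlt1⟩ with hw'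
        have hw'val : w'.val = w.val + 1 := rfl
        have hd1 : 1 ≤ d := by omega
        obtain ⟨u, hu, huniq⟩ := hN.1 (hN.2 w')
        have hu2 : u.val / 2 = w'.val / 2 :=
          ih (d - 1) (by omega) w' u (by omega) (by omega) hu
        have hune : w'.val ≠ u.val := Fin.val_ne_of_ne (N.adj_sub hu).ne
        have huw : u = w := Fin.ext (by omega)
        obtain ⟨t, ht, htuniq⟩ := hN.1 (hN.2 w)
        have h1 : v = t := htuniq v hadj.symm
        have h2 : w' = t := htuniq w' (huw ▸ hu).symm
        rw [← h2] at h1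
        have := congrArg Fin.val h1
        omega
  have keyAll : ∀ v w : Fin k, N.Adj v w → w.val / 2 = v.val / 2 := by
    intro v w hadj
    by_cases hodd : v.val % 2 = 1
    · exact key k v w hodd (by have := v.isLt; omega) hadj
    · have hvlt := v.isLt
      have hwlt := w.isLt
      have hv1 : v.val + 1 < k := by omega
      set v' : Fin k := ⟨v.val + 1, hv1⟩ with hv'
      have hv'val : v'.val = v.val + 1 := rfl
      obtain ⟨u, hu, huniq⟩ := hN.1 (hN.2 v')
      have hu2 : u.val / 2 = v'.val / 2 :=
        key k v' u (by omega) (by have := v'.isLt; omega) hu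
      have hune : v'.val ≠ u.val := Fin.val_ne_of_ne (N.adj_sub hu).ne
      have huv : u = v := Fin.ext (by omega)
      obtain ⟨t, ht, htuniq⟩ := hN.1 (hN.2 v)
      have h1 : w = t := htuniq w hadj
      have h2 : v' = t := htuniq v' (huv ▸ hu).symm
      rw [← h2] at h1
      have := congrArg Fin.val h1
      omega
  apply SimpleGraph.Subgraph.ext
  · rw [hN.2.verts_eq_univ]; rfl
  · ext x y
    rw [M0_adj]
    constructor
    · intro hadj
      exact ⟨(keyAll x y hadj).symm, (N.adj_sub hadj).ne⟩
    · rintro ⟨h1, h2⟩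
      have hxlt := x.isLt
      have hylt := y.isLt
      have h2v : x.val ≠ y.val := Fin.val_ne_of_ne h2
      by_cases hodd : x.val % 2 = 1
      · obtain ⟨u, hu, huniq⟩ := hN.1 (hN.2 x)
        have hu2 : u.val / 2 = x.val / 2 := keyAll x u hu
        have hune : x.val ≠ u.val := Fin.val_ne_of_ne (N.adj_sub hu).ne
        have huy : u = y := Fin.ext (by omega)
        rwa [← huy]
      · obtain ⟨u, hu, huniq⟩ := hN.1 (hN.2 y)
        have hu2 : u.val / 2 = y.val / 2 := keyAll y u hu
        have hune : y.val ≠ u.val := Fin.val_ne_of_ne (N.adj_sub hu).ne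
        have hux : u = x := Fin.ext (by omega)
        rw [← hux]
        exact hu.symm

lemma Hgraph_uniquePM {k n : ℕ} (hk : k = 2 * n) :
    ∃! M : (Hgraph k).Subgraph, M.IsPerfectMatching :=
  ⟨M0 k, M0_isPerfectMatching hk, fun N hN => M0_unique hk N hN⟩

lemma Hgraph_card_ge {k n : ℕ} (hk : k = 2 * n) :
    n * n ≤ (Hgraph k).edgeSet.ncard := by
  classical
  have hedge : (Hgraph k).edgeSet.ncard = (Hgraph k).edgeFinset.card := by
    rw [SimpleGraph.edgeFinset, Set.ncard_eq_toFinset_card']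
  rw [hedge]
  have hcard : (Finset.univ : Finset (Fin n × Fin n)).card = n * n := by
    simp [Finset.card_univ]
  rw [← hcard]
  apply Finset.card_le_card_of_injOn
    (fun ij => if ij.1 = ij.2 then
        s((⟨2 * ij.1.val, by have := ij.1.isLt; omega⟩ : Fin k),
          (⟨2 * ij.1.val + 1, by have := ij.1.isLt; omega⟩ : Fin k))
      else if ij.1 < ij.2 then
        s((⟨2 * ij.2.val, by have := ij.2.isLt; omega⟩ : Fin k),
          (⟨2 * ij.1.val, by have := ij.1.isLt; omega⟩ : Fin k))
      else
        s((⟨2 * ij.1.val, by have := ij.1.isLt; omega⟩ : Fin k),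
          (⟨2 * ij.2.val + 1, by have := ij.2.isLt; omega⟩ : Fin k)))
  · rintro ⟨i, j⟩ -
    have hi := i.isLt
    have hj := j.isLt
    simp only [Finset.mem_coe, SimpleGraph.mem_edgeFinset, SimpleGraph.mem_edgeSet]
    split_ifs with h1 h2
    · rw [SimpleGraph.mem_edgeSet, Hgraph_adj]
      refine ⟨Fin.ne_of_val_ne ?_, Or.inl ?_⟩
      · show 2 * i.val ≠ 2 * i.val + 1
        omega
      · show (2 * i.val) / 2 = (2 * i.val + 1) / 2
        omega
    · have h2v : i.val < j.val := Fin.lt_def.mp h2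
      rw [SimpleGraph.mem_edgeSet, Hgraph_adj]
      refine ⟨Fin.ne_of_val_ne ?_, Or.inr (Or.inl ⟨?_, ?_⟩)⟩
      · show 2 * j.val ≠ 2 * i.val
        omega
      · show (2 * j.val) % 2 = 0
        omega
      · show (2 * i.val) / 2 < (2 * j.val) / 2
        omega
    · have h1v : i.val ≠ j.val := Fin.val_ne_of_ne h1
      have h2v : ¬ i.val < j.val := fun hh => h2 (Fin.lt_def.mpr hh)
      rw [SimpleGraph.mem_edgeSet, Hgraph_adj]
      refine ⟨Fin.ne_of_val_ne ?_, Or.inr (Or.inl ⟨?_, ?_⟩)⟩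
      · show 2 * i.val ≠ 2 * j.val + 1
        omega
      · show (2 * i.val) % 2 = 0
        omega
      · show (2 * j.val + 1) / 2 < (2 * i.val) / 2
        omega
  · rintro ⟨⟨i, hi⟩, ⟨j, hj⟩⟩ - ⟨⟨i', hi'⟩, ⟨j', hj'⟩⟩ - h
    simp only at h
    split_ifs at h <;>
      simp_all only [Sym2.eq_iff, Fin.mk.injEq, Fin.mk_lt_mk, not_lt, Prod.mk.injEq] <;>
      omega



lemma cycle_walk_up {m : ℕ} : ∀ (t : ℕ) (j : Fin (m + 2)), j.val = t →
    ∃ p : (cycleGraph (m + 2)).Walk 0 j, p.length ≤ t := by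
  intro t
  induction t with
  | zero =>
    intro j hj
    have : j = 0 := Fin.ext (by simpa using hj)
    subst this
    exact ⟨Walk.nil, by simp⟩
  | succ t ih =>
    intro j hj
    have hjlt := j.isLt
    set j' : Fin (m + 2) := ⟨t, by omega⟩ with hj'
    have hj'v : j'.val = t := rfl
    obtain ⟨p, hp⟩ := ih j' rfl
    have hle : j' ≤ j := by rw [Fin.le_def]; omega
    have hadj : (cycleGraph (m + 2)).Adj j' j := by
      rw [cycleGraph_adj']
      right
      rw [Fin.coe_sub_iff_le.mpr hle]
      omega
    exact ⟨p.concat hadj, by rw [Walk.length_concat]; omega⟩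

lemma cycle_walk_down {m : ℕ} : ∀ (t : ℕ) (j : Fin (m + 2)), j.val + t = m + 2 →
    ∃ p : (cycleGraph (m + 2)).Walk 0 j, p.length ≤ t := by
  intro t
  induction t with
  | zero =>
    intro j hj
    have := j.isLt
    omega
  | succ t ih =>
    intro j hj
    have hjlt := j.isLt
    by_cases htop : j.val + 1 = m + 2
    · have h0 : (1 : Fin (m + 2)) + j = 0 := by
        apply Fin.ext
        rw [Fin.val_add, Fin.val_one, Fin.val_zero]
        have : 1 + j.val = m + 2 := by omega
        rw [this, Nat.mod_self]
      have h0' : j + 1 = 0 := by rw [add_comm j 1]; exact h0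
      have hsub : (0 : Fin (m + 2)) - j = 1 := sub_eq_iff_eq_add'.mpr h0'.symm
      have hadj : (cycleGraph (m + 2)).Adj 0 j := by
        rw [cycleGraph_adj]
        exact Or.inl hsub
      exact ⟨hadj.toWalk, by simp⟩
    · set j'' : Fin (m + 2) := ⟨j.val + 1, by omega⟩ with hj''
      have hj''v : j''.val = j.val + 1 := rfl
      obtain ⟨p, hp⟩ := ih j'' (by omega)
      have hle : j ≤ j'' := by rw [Fin.le_def]; omega
      have hadj : (cycleGraph (m + 2)).Adj j'' j := by
        rw [cycleGraph_adj']
        left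
        rw [Fin.coe_sub_iff_le.mpr hle]
        omega
      exact ⟨p.concat hadj, by rw [Walk.length_concat]; omega⟩

lemma cycle_dist_le_half {m : ℕ} (x y : Fin (m + 2)) :
    (cycleGraph (m + 2)).dist x y ≤ (m + 2) / 2 := by
  set j : Fin (m + 2) := y - x with hjdef
  have hwalk : ∃ p : (cycleGraph (m + 2)).Walk 0 j, p.length ≤ (m + 2) / 2 := by
    rcases le_or_gt j.val ((m + 2) / 2) with hle | hlt
    · obtain ⟨p, hp⟩ := cycle_walk_up j.val j rfl
      exact ⟨p, hp.trans hle⟩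
    · have := j.isLt
      obtain ⟨p, hp⟩ := cycle_walk_down ((m + 2) - j.val) j (by omega)
      exact ⟨p, hp.trans (by omega)⟩
  obtain ⟨p, hp⟩ := hwalk
  let hom : cycleGraph (m + 2) →g cycleGraph (m + 2) :=
    { toFun := fun v => v + x
      map_rel' := by
        intro a b h
        rw [cycleGraph_adj'] at h ⊢
        simpa only [add_sub_add_right_eq_sub] using h }
  have hd := SimpleGraph.dist_le (p.map hom)
  rw [Walk.length_map] at hd
  have h0 : hom 0 = x := zero_add x
  have hj : hom j = y := sub_add_cancel y x
  rw [h0, hj] at hd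
  exact hd.trans hp

lemma power_cycle_eq_top {k : ℕ} (hk4 : 4 ≤ k) {m' : ℕ} (hm : k / 2 ≤ m') :
    (cycleGraph k).power m' = ⊤ := by
  obtain ⟨m, rfl⟩ : ∃ m, k = m + 2 := ⟨k - 2, by omega⟩
  ext x y
  rw [top_adj]
  constructor
  · rintro ⟨h1, -⟩
    intro heq
    subst heq
    rw [SimpleGraph.dist_self] at h1
    omega
  · intro hne
    have hconn : (cycleGraph (m + 2)).Connected := cycleGraph_connected (n := m + 1)
    exact ⟨hconn.pos_dist_of_ne hne, (cycle_dist_le_half x y).trans hm⟩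


lemma afTop {k n : ℕ} (hk : k = 2 * n) (hn : 1 ≤ n) :
    antiForcing (⊤ : SimpleGraph (Fin k)) = n * n - n := by
  classical
  set S0 : Set (Sym2 (Fin k)) := (⊤ : SimpleGraph (Fin k)).edgeSet \ (Hgraph k).edgeSet with hS0
  have hsub : S0 ⊆ (⊤ : SimpleGraph (Fin k)).edgeSet := Set.diff_subset
  have hdel : (⊤ : SimpleGraph (Fin k)).deleteEdges S0 = Hgraph k := by
    ext x y
    rw [SimpleGraph.deleteEdges_adj, top_adj]
    constructor
    · rintro ⟨hne, hnotin⟩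
      rw [hS0, Set.mem_diff] at hnotin
      push_neg at hnotin
      have h1 := hnotin (by rw [SimpleGraph.mem_edgeSet, top_adj]; exact hne)
      rwa [SimpleGraph.mem_edgeSet] at h1
    · intro hadj
      refine ⟨hadj.ne, ?_⟩
      rw [hS0, Set.mem_diff]
      push_neg
      intro _
      rwa [SimpleGraph.mem_edgeSet]
  have hHPM : HasUniquePerfectMatching ((⊤ : SimpleGraph (Fin k)).deleteEdges S0) := by
    rw [hdel]; exact Hgraph_uniquePM hk
  have hHle : (Hgraph k).edgeSet.ncard ≤ n * n := hetyei_bound hk _ (Hgraph_uniquePM hk)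
  have hHge := Hgraph_card_ge hk
  have hHsubT : (Hgraph k).edgeSet ⊆ (⊤ : SimpleGraph (Fin k)).edgeSet :=
    SimpleGraph.edgeSet_mono le_top
  have hTfin : (⊤ : SimpleGraph (Fin k)).edgeSet.Finite := Set.toFinite _
  have hTop : (⊤ : SimpleGraph (Fin k)).edgeSet.ncard = n * (2 * n - 1) := by
    have h1 : (⊤ : SimpleGraph (Fin k)).edgeSet.ncard =
        (⊤ : SimpleGraph (Fin k)).edgeFinset.card := by
      rw [SimpleGraph.edgeFinset, Set.ncard_eq_toFinset_card']
    rw [h1, SimpleGraph.card_edgeFinset_top_eq_card_choose_two, Fintype.card_fin,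
      Nat.choose_two_right]
    have h2 : k * (k - 1) = 2 * (n * (2 * n - 1)) := by
      rw [hk]; exact mul_assoc 2 n (2 * n - 1)
    omega
  have hident : n * (2 * n - 1) + n = 2 * (n * n) := by
    calc n * (2 * n - 1) + n = n * ((2 * n - 1) + 1) := by ring
      _ = n * (2 * n) := by rw [Nat.sub_add_cancel (by omega)]
      _ = 2 * (n * n) := by ring
  have hS0card : S0.ncard = (⊤ : SimpleGraph (Fin k)).edgeSet.ncard -
      (Hgraph k).edgeSet.ncard := Set.ncard_diff hHsubT
  have hS0val : S0.ncard = n * n - n := by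
    rw [hS0card, hTop]
    omega
  have hcond : (∃ S : Set (Sym2 (Fin k)), S ⊆ (⊤ : SimpleGraph (Fin k)).edgeSet ∧
      HasUniquePerfectMatching ((⊤ : SimpleGraph (Fin k)).deleteEdges S)) := ⟨S0, hsub, hHPM⟩
  unfold antiForcing
  rw [if_pos hcond]
  apply le_antisymm
  · exact Nat.sInf_le ⟨S0, hsub, hHPM, hS0val⟩
  · apply le_csInf
    · exact ⟨n * n - n, S0, hsub, hHPM, hS0val⟩
    rintro b ⟨S, hSsub, hSPM, rfl⟩
    have hbound := hetyei_bound hk _ hSPM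
    have hEdel : ((⊤ : SimpleGraph (Fin k)).deleteEdges S).edgeSet =
        (⊤ : SimpleGraph (Fin k)).edgeSet \ S := SimpleGraph.edgeSet_deleteEdges S
    rw [hEdel] at hbound
    have hdiff : ((⊤ : SimpleGraph (Fin k)).edgeSet \ S).ncard =
        (⊤ : SimpleGraph (Fin k)).edgeSet.ncard - S.ncard := Set.ncard_diff hSsub
    rw [hdiff, hTop] at hbound
    omega

end AntiForcingProof

/-- For a cycle `C k` of even order `k ≥ 4`, `af(C_k^{k/2}) = k(k-2)/4`; moreover for every
`m ≥ k/2`, `C_k^m` is the complete graph `K_k` and `af(C_k^m) = k(k-2)/4`. -/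
theorem antiForcing_cycleGraph_power_half (k : ℕ) (hk : Even k) (h4 : 4 ≤ k) :
    antiForcing ((cycleGraph k).power (k / 2)) = k * (k - 2) / 4 ∧
      ∀ m : ℕ, k / 2 ≤ m → (cycleGraph k).power m = ⊤ ∧
        antiForcing ((cycleGraph k).power m) = k * (k - 2) / 4 := by
  obtain ⟨r, hr⟩ := hk
  have hk2n : k = 2 * r := by omega
  have hn : 2 ≤ r := by omega
  have hval : k * (k - 2) / 4 = r * r - r := by
    obtain ⟨a, ha⟩ : ∃ a, r = a + 2 := ⟨r - 2, by omega⟩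
    have e2 : r * r - r = a * a + 3 * a + 2 := by
      have e3 : r * r = a * a + 4 * a + 4 := by rw [ha]; ring
      omega
    have e4 : k * (k - 2) = 4 * (a * a + 3 * a + 2) := by
      have e1 : k - 2 = 2 * a + 2 := by omega
      rw [e1, hk2n, ha]; ring
    omega
  have hmain : ∀ m : ℕ, k / 2 ≤ m → (cycleGraph k).power m = ⊤ ∧
      antiForcing ((cycleGraph k).power m) = k * (k - 2) / 4 := by
    intro m hm
    have htop : (cycleGraph k).power m = ⊤ := power_cycle_eq_top h4 hm
    refine ⟨htop, ?_⟩
    rw [htop, afTop hk2n (by omega), hval]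
  exact ⟨(hmain (k / 2) le_rfl).2, hmain⟩
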